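/- Let α < β, d > 0, b > 0, and let I : [α, β] → ℝ be continuous. There exists a constant C > 0 (depending only on α, β, d, b and I) such that for every t ∈ [0, 1] and every twice continuously differentiable u : [α, β] → ℝ with u'(α) = u'(β) = 0 satisfying −d u''(x) + u(x)/b = t(−u(x)³ + 3u(x) + I(x)) for all x ∈ [α, β], one has ∫_α^β u(x)² dx ≤ C and ∫_α^β u'(x)² dx ≤ C. -/

import Mathlib

/-- A priori bound for the Leray–Schauder homotopy: for `α < β`, `d > 0`, `b > 0`
and continuous `I`, there is `C > 0` such that every `t ∈ [0,1]` and every `C²`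
Neumann solution `u` of `-d u'' + u/b = t(-u³ + 3u + I(x))` on `[α, β]` satisfies
`∫ u² ≤ C` and `∫ u'² ≤ C`. -/
theorem stmt_15 (α β d b : ℝ) (hab : α < β) (hd : 0 < d) (hb : 0 < b)
    (I : ℝ → ℝ) (hI : ContinuousOn I (Set.Icc α β)) :
    ∃ C > (0:ℝ), ∀ t ∈ Set.Icc (0:ℝ) 1, ∀ u : ℝ → ℝ, ContDiff ℝ 2 u →
      deriv u α = 0 → deriv u β = 0 →
      (∀ x ∈ Set.Icc α β,
        -d * deriv (deriv u) x + u x / b = t * (-(u x)^3 + 3*(u x) + I x)) →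
      (∫ x in α..β, (u x)^2) ≤ C ∧ (∫ x in α..β, (deriv u x)^2) ≤ C := by
  obtain ⟨M, hM⟩ := isCompact_Icc.exists_bound_of_continuousOn hI
  have hM0 : 0 ≤ M := le_trans (norm_nonneg _) (hM α ⟨le_refl α, hab.le⟩)
  obtain ⟨K, hKdef⟩ : ∃ K : ℝ, K = 49/16 + M^2/2 := ⟨_, rfl⟩
  have hK0 : 0 < K := by rw [hKdef]; positivity
  have hba : (0:ℝ) < β - α := sub_pos.mpr hab
  have hKba : (0:ℝ) ≤ K * (β - α) := by positivity
  refine ⟨b * (K * (β - α)) + K * (β - α) / d + 1,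
    by nlinarith [mul_nonneg hb.le hKba, div_nonneg hKba hd.le], ?_⟩
  rintro t ⟨ht0, ht1⟩ u hu hNα hNβ heq
  have hu1 : Differentiable ℝ u := hu.differentiable (by norm_num)
  have huc : Continuous u := hu.continuous
  have hdu : ContDiff ℝ 1 (deriv u) :=
    (contDiff_succ_iff_deriv.mp (by exact_mod_cast hu : ContDiff ℝ ((1:ℕ)+1) u)).2.2
  have hdu1 : Differentiable ℝ (deriv u) := hdu.differentiable (by norm_num)
  have hduc : Continuous (deriv u) := hdu.continuous
  have hdduc : Continuous (deriv (deriv u)) :=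
    ((contDiff_succ_iff_deriv.mp (by exact_mod_cast hdu : ContDiff ℝ ((0:ℕ)+1) (deriv u))).2.2).continuous
  -- integrability
  have i1 : IntervalIntegrable (fun x => deriv u x * deriv u x) MeasureTheory.volume α β :=
    (hduc.mul hduc).intervalIntegrable α β
  have i1' : IntervalIntegrable (fun x => (deriv u x)^2) MeasureTheory.volume α β :=
    ((hduc.pow 2)).intervalIntegrable α β
  have i2 : IntervalIntegrable (fun x => deriv (deriv u) x * u x) MeasureTheory.volume α β :=
    (hdduc.mul huc).intervalIntegrable α β
  have i2' : IntervalIntegrable (fun x => -d * deriv (deriv u) x * u x) MeasureTheory.volume α β :=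
    ((continuous_const.mul hdduc).mul huc).intervalIntegrable α β
  have i3 : IntervalIntegrable (fun x => (u x)^2 / b) MeasureTheory.volume α β :=
    ((huc.pow 2).div_const b).intervalIntegrable α β
  have i4 : IntervalIntegrable (fun x => (u x)^2) MeasureTheory.volume α β :=
    ((huc.pow 2)).intervalIntegrable α β
  have hIcc : Set.uIcc α β = Set.Icc α β := Set.uIcc_of_le hab.le
  have iR : IntervalIntegrable (fun x => t * ((-(u x)^3 + 3*(u x) + I x) * u x))
      MeasureTheory.volume α β := by
    apply ContinuousOn.intervalIntegrable
    rw [hIcc]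
    exact (continuousOn_const.mul
      ((((huc.pow 3).neg.continuousOn.add (continuousOn_const.mul huc.continuousOn)).add hI).mul
        huc.continuousOn))
  -- integration by parts
  have ibp : ∫ x in α..β, (deriv (deriv u) x * u x + deriv u x * deriv u x)
      = deriv u β * u β - deriv u α * u α :=
    intervalIntegral.integral_deriv_mul_eq_sub
      (fun x _ => (hdu1 x).hasDerivAt) (fun x _ => (hu1 x).hasDerivAt)
      (hdduc.intervalIntegrable α β) (hduc.intervalIntegrable α β)
  rw [hNα, hNβ] at ibp
  simp only [zero_mul, sub_zero, sub_self] at ibp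
  rw [intervalIntegral.integral_add i2 i1] at ibp
  have h2 : (∫ x in α..β, deriv (deriv u) x * u x) = - ∫ x in α..β, (deriv u x)^2 := by
    have : (∫ x in α..β, deriv u x * deriv u x) = ∫ x in α..β, (deriv u x)^2 := by
      apply intervalIntegral.integral_congr; intro x _; ring
    linarith [ibp, this]
  -- main energy identity / estimate
  have key : d * (∫ x in α..β, (deriv u x)^2) + (∫ x in α..β, (u x)^2) / b ≤ K * (β - α) := by
    have hEq : (∫ x in α..β, (-d * deriv (deriv u) x * u x + (u x)^2 / b))
        = ∫ x in α..β, t * ((-(u x)^3 + 3*(u x) + I x) * u x) := by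
      apply intervalIntegral.integral_congr
      intro x hx
      rw [hIcc] at hx
      have h := heq x hx
      have : (-d * deriv (deriv u) x + u x / b) * u x
          = (t * (-(u x)^3 + 3*(u x) + I x)) * u x := by rw [h]
      calc -d * deriv (deriv u) x * u x + (u x)^2 / b
          = (-d * deriv (deriv u) x + u x / b) * u x := by ring
        _ = (t * (-(u x)^3 + 3*(u x) + I x)) * u x := this
        _ = t * ((-(u x)^3 + 3*(u x) + I x) * u x) := by ring
    have hL : (∫ x in α..β, (-d * deriv (deriv u) x * u x + (u x)^2 / b))
        = d * (∫ x in α..β, (deriv u x)^2) + (∫ x in α..β, (u x)^2) / b := by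
      rw [intervalIntegral.integral_add i2' i3]
      have e1 : (∫ x in α..β, -d * deriv (deriv u) x * u x)
          = -d * ∫ x in α..β, deriv (deriv u) x * u x := by
        rw [← intervalIntegral.integral_const_mul]
        apply intervalIntegral.integral_congr; intro x _; ring
      have e2 : (∫ x in α..β, (u x)^2 / b) = (∫ x in α..β, (u x)^2) / b := by
        rw [intervalIntegral.integral_div]
      rw [e1, e2, h2]; ring
    have hR : (∫ x in α..β, t * ((-(u x)^3 + 3*(u x) + I x) * u x)) ≤ K * (β - α) := by
      have hbd : ∀ x ∈ Set.Icc α β, t * ((-(u x)^3 + 3*(u x) + I x) * u x) ≤ K := by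
        intro x hx
        have hIx : |I x| ≤ M := by
          have := hM x hx
          simpa [Real.norm_eq_abs] using this
        obtain ⟨hI1, hI2⟩ := abs_le.mp hIx
        set v := u x
        have hg : (-(v)^3 + 3*v + I x) * v ≤ K := by
          have hi2 : (I x)^2 ≤ M^2 := sq_le_sq' hI1 hI2
          rw [hKdef]
          nlinarith [sq_nonneg (v^2 - 7/4), sq_nonneg (v - I x)]
        have : t * ((-(v)^3 + 3*v + I x) * v) ≤ t * K ∨
            t * ((-(v)^3 + 3*v + I x) * v) ≤ 0 := by
          rcases le_or_gt 0 ((-(v)^3 + 3*v + I x) * v) with h | h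
          · exact Or.inl (mul_le_mul_of_nonneg_left hg ht0)
          · exact Or.inr (mul_nonpos_of_nonneg_of_nonpos ht0 h.le)
        rcases this with h | h
        · calc t * ((-(v)^3 + 3*v + I x) * v) ≤ t * K := h
            _ ≤ 1 * K := mul_le_mul_of_nonneg_right ht1 hK0.le
            _ = K := one_mul K
        · linarith
      calc (∫ x in α..β, t * ((-(u x)^3 + 3*(u x) + I x) * u x))
          ≤ ∫ _x in α..β, K :=
            intervalIntegral.integral_mono_on hab.le iR intervalIntegrable_const hbd
        _ = K * (β - α) := by simp [smul_eq_mul, mul_comm]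
    calc d * (∫ x in α..β, (deriv u x)^2) + (∫ x in α..β, (u x)^2) / b
        = ∫ x in α..β, (-d * deriv (deriv u) x * u x + (u x)^2 / b) := hL.symm
      _ = ∫ x in α..β, t * ((-(u x)^3 + 3*(u x) + I x) * u x) := hEq
      _ ≤ K * (β - α) := hR
  have hA0 : 0 ≤ ∫ x in α..β, (deriv u x)^2 :=
    intervalIntegral.integral_nonneg hab.le (fun x _ => sq_nonneg _)
  have hB0 : 0 ≤ ∫ x in α..β, (u x)^2 :=
    intervalIntegral.integral_nonneg hab.le (fun x _ => sq_nonneg _)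
  constructor
  · have h1 : (∫ x in α..β, (u x)^2) / b ≤ K * (β - α) := by nlinarith
    have h2 : (∫ x in α..β, (u x)^2) ≤ b * (K * (β - α)) := by
      rw [div_le_iff₀ hb] at h1; linarith [h1]
    have h3 : 0 ≤ K * (β - α) / d := by positivity
    linarith
  · have h1 : d * (∫ x in α..β, (deriv u x)^2) ≤ K * (β - α) := by
      have : 0 ≤ (∫ x in α..β, (u x)^2) / b := div_nonneg hB0 hb.le
      linarith
    have h2 : (∫ x in α..β, (deriv u x)^2) ≤ K * (β - α) / d := by
      rw [le_div_iff₀ hd]; linarith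
    have h3 : 0 ≤ b * (K * (β - α)) := by positivity
    linarith
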